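/- Let A₁, …, A_m ∈ ℝ^{n×n} be positive semidefinite with Aᵢ·Aⱼ = 0 for all i ≠ j, and let p₁, …, p_m > 0 with p₁ + ⋯ + p_m = 1. Then a positive semidefinite matrix Â minimizes B ↦ ∑ᵢ pᵢ·W₂²(Aᵢ, B) over all positive semidefinite matrices B if and only if there exist matrices G₁, …, G_m with Gᵢ·Gᵢᵀ = Aᵢ for each i such that Â = Ĝ·Ĝᵀ, where Ĝ = ∑ᵢ pᵢ·Gᵢ. -/

import Mathlib

open Matrix

/-- The positive semidefinite square root of a psd matrix (junk value `0` otherwise). -/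
noncomputable def psdSqrt {n : ℕ} (M : Matrix (Fin n) (Fin n) ℝ) : Matrix (Fin n) (Fin n) ℝ :=
  letI := Classical.propDecidable M.PosSemidef
  if h : M.PosSemidef then
    (h.1.eigenvectorUnitary : Matrix (Fin n) (Fin n) ℝ) *
      diagonal ((↑) ∘ (√·) ∘ h.1.eigenvalues) *
      (star h.1.eigenvectorUnitary : Matrix (Fin n) (Fin n) ℝ)
  else 0

/-- `trace √(√A·B·√A)`. -/
noncomputable def sqrtTr {n : ℕ} (A B : Matrix (Fin n) (Fin n) ℝ) : ℝ :=
  (psdSqrt (psdSqrt A * B * psdSqrt A)).trace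

/-- `T` is an optimal transport matrix from `A` to `B`. -/
def IsOT {n : ℕ} (A B T : Matrix (Fin n) (Fin n) ℝ) : Prop :=
  T * A * Tᵀ = B ∧ (A * T).trace = sqrtTr A B

/-- Squared Bures–Wasserstein distance. -/
noncomputable def W2sq {n : ℕ} (A B : Matrix (Fin n) (Fin n) ℝ) : ℝ :=
  A.trace + B.trace - 2 * sqrtTr A B

section Aux

open Matrix Module

variable {n : ℕ}

local notation "E" => EuclideanSpace ℝ (Fin n)

/-- Polar decomposition step at linear-map level. -/
lemma polar_linmap (T P : E →ₗ[ℝ] E) (h : ∀ x, ‖T x‖ = ‖P x‖) :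
    ∃ W : E →ₗᵢ[ℝ] E, ∀ x, W (P x) = T x := by
  have hker : LinearMap.ker P ≤ LinearMap.ker T := by
    intro x hx
    rw [LinearMap.mem_ker] at hx ⊢
    have := h x
    rw [hx, norm_zero, norm_eq_zero] at this
    exact this
  let T' : (E ⧸ LinearMap.ker P) →ₗ[ℝ] E := (LinearMap.ker P).liftQ T hker
  let e := P.quotKerEquivRange
  let f₀ : LinearMap.range P →ₗ[ℝ] E := T' ∘ₗ (e.symm : LinearMap.range P ≃ₗ[ℝ] _).toLinearMap
  have keyf : ∀ x : E, f₀ ⟨P x, LinearMap.mem_range_self P x⟩ = T x := by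
    intro x
    have h1 : e (Submodule.Quotient.mk x) = ⟨P x, LinearMap.mem_range_self P x⟩ :=
      Subtype.ext (P.quotKerEquivRange_apply_mk x)
    have h2 : e.symm ⟨P x, LinearMap.mem_range_self P x⟩ = Submodule.Quotient.mk x := by
      rw [← h1, LinearEquiv.symm_apply_apply]
    simp only [f₀, LinearMap.comp_apply, LinearEquiv.coe_coe, h2]
    rfl
  have normf : ∀ y : LinearMap.range P, ‖f₀ y‖ = ‖y‖ := by
    rintro ⟨y, x, rfl⟩
    rw [keyf x]
    exact (h x).trans rfl
  let f : LinearMap.range P →ₗᵢ[ℝ] E := ⟨f₀, normf⟩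
  refine ⟨f.extend, fun x => ?_⟩
  have := f.extend_apply ⟨P x, LinearMap.mem_range_self P x⟩
  rw [this]
  exact keyf x

/-- The square root of a psd matrix (formerly `Matrix.PosSemidef.sqrt` in Mathlib). -/
noncomputable def Matrix.PosSemidef.sqrt {M : Matrix (Fin n) (Fin n) ℝ} (h : M.PosSemidef) :
    Matrix (Fin n) (Fin n) ℝ :=
  (h.1.eigenvectorUnitary : Matrix (Fin n) (Fin n) ℝ) *
    diagonal ((↑) ∘ (√·) ∘ h.1.eigenvalues) *
    (star h.1.eigenvectorUnitary : Matrix (Fin n) (Fin n) ℝ)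

lemma Matrix.PosSemidef.posSemidef_sqrt {M : Matrix (Fin n) (Fin n) ℝ} (h : M.PosSemidef) :
    h.sqrt.PosSemidef := by
  have hD : (diagonal ((↑) ∘ (√·) ∘ h.1.eigenvalues) : Matrix (Fin n) (Fin n) ℝ).PosSemidef :=
    posSemidef_diagonal_iff.mpr (fun i => by simp [Real.sqrt_nonneg])
  have := hD.mul_mul_conjTranspose_same (h.1.eigenvectorUnitary : Matrix (Fin n) (Fin n) ℝ)
  simpa [Matrix.PosSemidef.sqrt, Unitary.coe_star, Matrix.star_eq_conjTranspose] using this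

lemma Matrix.PosSemidef.sqrt_mul_self {M : Matrix (Fin n) (Fin n) ℝ} (h : M.PosSemidef) :
    h.sqrt * h.sqrt = M := by
  set U : Matrix (Fin n) (Fin n) ℝ := (h.1.eigenvectorUnitary : Matrix (Fin n) (Fin n) ℝ) with hU
  have hUU : (star h.1.eigenvectorUnitary : Matrix (Fin n) (Fin n) ℝ) * U = 1 :=
    Unitary.coe_star_mul_self _
  have hDD : (diagonal ((↑) ∘ (√·) ∘ h.1.eigenvalues) : Matrix (Fin n) (Fin n) ℝ) *
      diagonal ((↑) ∘ (√·) ∘ h.1.eigenvalues) = diagonal ((↑) ∘ h.1.eigenvalues) := by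
    rw [diagonal_mul_diagonal]
    congr 1; funext i
    simp [Real.mul_self_sqrt (h.eigenvalues_nonneg i)]
  have hs := h.1.spectral_theorem
  calc h.sqrt * h.sqrt
      = U * (diagonal ((↑) ∘ (√·) ∘ h.1.eigenvalues) *
          ((star h.1.eigenvectorUnitary : Matrix (Fin n) (Fin n) ℝ) * U) *
          diagonal ((↑) ∘ (√·) ∘ h.1.eigenvalues)) *
          (star h.1.eigenvectorUnitary : Matrix (Fin n) (Fin n) ℝ) := by
        simp only [Matrix.PosSemidef.sqrt, hU, Matrix.mul_assoc]
    _ = M := by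
        rw [hUU, Matrix.mul_one, hDD]
        conv_rhs => rw [hs]
        simp [hU, Unitary.conjStarAlgAut_apply]
        rfl

lemma psdSqrt_eq {M : Matrix (Fin n) (Fin n) ℝ} (h : M.PosSemidef) : psdSqrt M = h.sqrt := by
  simp [psdSqrt, h, Matrix.PosSemidef.sqrt]

lemma psdSqrt_posSemidef {M : Matrix (Fin n) (Fin n) ℝ} (h : M.PosSemidef) :
    (psdSqrt M).PosSemidef := by rw [psdSqrt_eq h]; exact h.posSemidef_sqrt

lemma psdSqrt_mul_self {M : Matrix (Fin n) (Fin n) ℝ} (h : M.PosSemidef) :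
    psdSqrt M * psdSqrt M = M := by rw [psdSqrt_eq h]; exact h.sqrt_mul_self

lemma psd_transpose_eq {M : Matrix (Fin n) (Fin n) ℝ} (h : M.PosSemidef) : Mᵀ = M := by
  rw [← Matrix.conjTranspose_eq_transpose_of_trivial]; exact h.1

lemma psdSqrt_transpose {M : Matrix (Fin n) (Fin n) ℝ} (h : M.PosSemidef) :
    (psdSqrt M)ᵀ = psdSqrt M := psd_transpose_eq (psdSqrt_posSemidef h)

/-- Polar decomposition for square real matrices. -/
lemma matrix_polar (M : Matrix (Fin n) (Fin n) ℝ) :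
    ∃ W : Matrix (Fin n) (Fin n) ℝ, Wᵀ * W = 1 ∧ W * Wᵀ = 1 ∧ M = W * psdSqrt (Mᵀ * M) := by
  have hMtM : (Mᵀ * M).PosSemidef := by
    simpa [Matrix.conjTranspose_eq_transpose_of_trivial] using
      Matrix.posSemidef_conjTranspose_mul_self M
  set N := psdSqrt (Mᵀ * M) with hN
  have hNpsd : N.PosSemidef := psdSqrt_posSemidef hMtM
  have hNsymm : Nᵀ = N := psd_transpose_eq hNpsd
  have hNN : N * N = Mᵀ * M := psdSqrt_mul_self hMtM
  -- norm identity
  have hnorm : ∀ x : EuclideanSpace ℝ (Fin n),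
      ‖Matrix.toEuclideanLin M x‖ = ‖Matrix.toEuclideanLin N x‖ := by
    intro x
    have h1 : ∀ (A : Matrix (Fin n) (Fin n) ℝ) (x : EuclideanSpace ℝ (Fin n)),
        ‖Matrix.toEuclideanLin A x‖ ^ 2 = (A *ᵥ x) ⬝ᵥ (A *ᵥ x) := by
      intro A x
      rw [← real_inner_self_eq_norm_sq]
      simp only [PiLp.inner_apply, RCLike.inner_apply, conj_trivial, dotProduct]
      rfl
    have e1 : ∀ (A : Matrix (Fin n) (Fin n) ℝ) (x : Fin n → ℝ),
        (A *ᵥ x) ⬝ᵥ (A *ᵥ x) = x ᵥ* (Aᵀ * A) ⬝ᵥ x := by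
      intro A x
      rw [Matrix.dotProduct_mulVec, Matrix.vecMul_mulVec]
    have h2 : (M *ᵥ x) ⬝ᵥ (M *ᵥ x) = (N *ᵥ x) ⬝ᵥ (N *ᵥ x) := by
      rw [e1, e1, hNsymm, hNN]
    have := (h1 M x).trans (h2.trans (h1 N x).symm)
    have hM0 : (0:ℝ) ≤ ‖Matrix.toEuclideanLin M x‖ := norm_nonneg _
    have hN0 : (0:ℝ) ≤ ‖Matrix.toEuclideanLin N x‖ := norm_nonneg _
    nlinarith [this]
  obtain ⟨W', hW'⟩ := polar_linmap (Matrix.toEuclideanLin M) (Matrix.toEuclideanLin N) hnorm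
  set W : Matrix (Fin n) (Fin n) ℝ := Matrix.toEuclideanLin.symm W'.toLinearMap with hWdef
  have hWapp : ∀ x : EuclideanSpace ℝ (Fin n), Matrix.toEuclideanLin W x = W' x := by
    intro x
    rw [hWdef, LinearEquiv.apply_symm_apply]
    rfl
  have hWmulVec : ∀ (x : Fin n → ℝ) (j : Fin n), (W *ᵥ x) j = W' (WithLp.toLp 2 x) j := by
    intro x j
    have := hWapp (WithLp.toLp 2 x)
    have h := congrFun (congrArg (fun f => (WithLp.equiv 2 (Fin n → ℝ)) f) this) j
    exact h
  have hMeq : M = W * N := by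
    have hmv : ∀ x : Fin n → ℝ, M *ᵥ x = (W * N) *ᵥ x := by
      intro x
      rw [← Matrix.mulVec_mulVec]
      funext j
      rw [hWmulVec (N *ᵥ x) j]
      have := hW' (WithLp.toLp 2 x)
      have h := congrFun (congrArg (fun f => (WithLp.equiv 2 (Fin n → ℝ)) f) this) j
      exact h.symm
    ext i j
    have := congrFun (hmv (Pi.single j 1)) i
    simpa [Matrix.mulVec_single] using this
  have horth : Wᵀ * W = 1 := by
    ext i j
    have hin := W'.inner_map_map (EuclideanSpace.single i (1:ℝ)) (EuclideanSpace.single j (1:ℝ))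
    simp only [PiLp.inner_apply, RCLike.inner_apply, conj_trivial] at hin
    have hcol : ∀ (k l : Fin n), W' (EuclideanSpace.single k (1:ℝ)) l = W l k := by
      intro k l
      rw [← hWmulVec]
      show (W *ᵥ Pi.single k 1) l = W l k
      simp [Matrix.mulVec_single]
    simp only [hcol] at hin
    have hsingle : ∀ (k l : Fin n), (EuclideanSpace.single k (1:ℝ)) l = if l = k then 1 else 0 := by
      intro k l; simp [EuclideanSpace.single_apply]
    rw [Matrix.mul_apply, Matrix.one_apply]
    simp only [Matrix.transpose_apply]
    rw [show ∑ k, W k i * W k j = ∑ k, W k j * W k i from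
      Finset.sum_congr rfl fun _ _ => mul_comm _ _, hin]
    simp [hsingle, eq_comm]
  exact ⟨W, horth, (mul_eq_one_comm).mp horth, hMeq⟩

/-- trace of `P * Q` for psd `P` and orthogonal `Q` is at most trace of `P`. -/
lemma trace_psd_mul_orth_le {P Q : Matrix (Fin n) (Fin n) ℝ} (hP : P.PosSemidef)
    (hQ : Qᵀ * Q = 1) : (P * Q).trace ≤ P.trace := by
  set R := psdSqrt P with hR
  have hRR : R * R = P := psdSqrt_mul_self hP
  have hRsymm : Rᵀ = R := psdSqrt_transpose hP
  have hsym : ∀ a b, R a b = R b a := by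
    intro a b
    simpa using congrFun (congrFun hRsymm b) a
  have key : (P * Q).trace = (R * Q * R).trace := by
    rw [← hRR, Matrix.mul_assoc, Matrix.trace_mul_comm R (R * Q), Matrix.mul_assoc]
  rw [key]
  conv_rhs => rw [← hRR]
  have hdiag : ∀ i, (R * Q * R) i i ≤ (R * R) i i := by
    intro i
    set r : Fin n → ℝ := fun k => R i k with hr
    have h1 : (R * Q * R) i i = r ⬝ᵥ (Q *ᵥ r) := by
      simp only [Matrix.mul_apply, dotProduct, Matrix.mulVec, dotProduct,
        Finset.sum_mul, Finset.mul_sum, hr]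
      rw [Finset.sum_comm]
      apply Finset.sum_congr rfl; intro l _
      apply Finset.sum_congr rfl; intro k _
      rw [hsym k i]; ring
    have h2 : (R * R) i i = r ⬝ᵥ r := by
      simp only [Matrix.mul_apply, dotProduct, hr]
      apply Finset.sum_congr rfl; intro k _
      rw [hsym k i]
    have h0 : (0:ℝ) ≤ r ⬝ᵥ r := Finset.sum_nonneg fun k _ => mul_self_nonneg _
    have hQr : (Q *ᵥ r) ⬝ᵥ (Q *ᵥ r) = r ⬝ᵥ r := by
      rw [Matrix.dotProduct_mulVec, Matrix.vecMul_mulVec, hQ]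
      simp
    have hcs : r ⬝ᵥ (Q *ᵥ r) ≤ Real.sqrt (∑ k, r k ^ 2) * Real.sqrt (∑ k, (Q *ᵥ r) k ^ 2) := by
      have := Real.sum_mul_le_sqrt_mul_sqrt Finset.univ r (Q *ᵥ r)
      simpa [dotProduct] using this
    have hrr : ∑ k, r k ^ 2 = r ⬝ᵥ r := by simp [dotProduct, sq]
    have hqq : ∑ k, (Q *ᵥ r) k ^ 2 = r ⬝ᵥ r := by
      rw [← hQr]; simp [dotProduct, sq]
    rw [hrr, hqq, Real.mul_self_sqrt h0] at hcs
    rw [h1, h2]; exact hcs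
  exact Finset.sum_le_sum fun i _ => hdiag i


section Bounds

variable {A B : Matrix (Fin n) (Fin n) ℝ}

lemma sqrtTr_eq_polar (hA : A.PosSemidef) (hB : B.PosSemidef) :
    (psdSqrt B * psdSqrt A)ᵀ * (psdSqrt B * psdSqrt A) = psdSqrt A * B * psdSqrt A := by
  rw [Matrix.transpose_mul, psdSqrt_transpose hA, psdSqrt_transpose hB]
  calc psdSqrt A * psdSqrt B * (psdSqrt B * psdSqrt A)
      = psdSqrt A * (psdSqrt B * psdSqrt B) * psdSqrt A := by
        simp only [Matrix.mul_assoc]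
    _ = psdSqrt A * B * psdSqrt A := by rw [psdSqrt_mul_self hB]

/-- Lemma A: trace of `G * Hᵀ` is at most `sqrtTr A B` for any Green's matrices. -/
lemma trace_le_sqrtTr (hA : A.PosSemidef) (hB : B.PosSemidef)
    {G H : Matrix (Fin n) (Fin n) ℝ} (hG : G * Gᵀ = A) (hH : H * Hᵀ = B) :
    (G * Hᵀ).trace ≤ sqrtTr A B := by
  -- polar decompositions of Gᵀ and Hᵀ
  obtain ⟨W₁, hW₁o, hW₁o', hW₁⟩ := matrix_polar Gᵀ
  obtain ⟨W₂, hW₂o, hW₂o', hW₂⟩ := matrix_polar Hᵀ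
  have hGA : (Gᵀ)ᵀ * Gᵀ = A := by rw [Matrix.transpose_transpose, hG]
  have hHB : (Hᵀ)ᵀ * Hᵀ = B := by rw [Matrix.transpose_transpose, hH]
  rw [hGA] at hW₁
  rw [hHB] at hW₂
  -- polar decomposition of √B√A
  obtain ⟨W₀, hW₀o, hW₀o', hW₀⟩ := matrix_polar (psdSqrt B * psdSqrt A)
  set C := psdSqrt ((psdSqrt B * psdSqrt A)ᵀ * (psdSqrt B * psdSqrt A)) with hC
  have hCtr : sqrtTr A B = C.trace := by
    rw [hC, sqrtTr_eq_polar hA hB, sqrtTr]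
  have hCpsd : C.PosSemidef := by
    apply psdSqrt_posSemidef
    rw [sqrtTr_eq_polar hA hB]
    have := hB.mul_mul_conjTranspose_same (psdSqrt A)
    rw [Matrix.conjTranspose_eq_transpose_of_trivial, psdSqrt_transpose hA] at this
    exact this
  -- rewrite G and H
  have hGeq : G = psdSqrt A * W₁ᵀ := by
    have := congrArg Matrix.transpose hW₁
    rw [Matrix.transpose_transpose, Matrix.transpose_mul, psdSqrt_transpose hA] at this
    exact this
  have hHTeq : Hᵀ = W₂ * psdSqrt B := hW₂
  have key : G * Hᵀ = psdSqrt A * (W₁ᵀ * W₂) * psdSqrt B := by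
    rw [hGeq, hHTeq]; simp only [Matrix.mul_assoc]
  rw [key, hCtr]
  have tr1 : (psdSqrt A * (W₁ᵀ * W₂) * psdSqrt B).trace
      = (psdSqrt B * psdSqrt A * (W₁ᵀ * W₂)).trace := by
    rw [Matrix.trace_mul_comm, Matrix.mul_assoc]
  rw [tr1, hW₀]
  have tr2 : (W₀ * C * (W₁ᵀ * W₂)).trace = (C * (W₁ᵀ * W₂ * W₀)).trace := by
    rw [Matrix.mul_assoc, Matrix.trace_mul_comm W₀ (C * (W₁ᵀ * W₂)), Matrix.mul_assoc]
  rw [tr2]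
  apply trace_psd_mul_orth_le hCpsd
  -- (W₁ᵀW₂W₀)ᵀ (W₁ᵀW₂W₀) = 1
  rw [Matrix.transpose_mul, Matrix.transpose_mul, Matrix.transpose_transpose]
  calc W₀ᵀ * (W₂ᵀ * W₁) * (W₁ᵀ * W₂ * W₀)
      = W₀ᵀ * (W₂ᵀ * (W₁ * W₁ᵀ) * (W₂ * W₀)) := by simp only [Matrix.mul_assoc]
    _ = W₀ᵀ * (W₂ᵀ * W₂ * W₀) := by rw [hW₁o']; simp only [Matrix.mul_one, Matrix.mul_assoc]
    _ = W₀ᵀ * W₀ := by rw [hW₂o, Matrix.one_mul]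
    _ = 1 := hW₀o

/-- Lemma B': existence of an optimal Green's matrix. -/
lemma exists_optimal_G (hA : A.PosSemidef) (hB : B.PosSemidef) :
    ∃ G : Matrix (Fin n) (Fin n) ℝ, G * Gᵀ = A ∧ (G * psdSqrt B).trace = sqrtTr A B := by
  obtain ⟨W₀, hW₀o, hW₀o', hW₀⟩ := matrix_polar (psdSqrt B * psdSqrt A)
  set C := psdSqrt ((psdSqrt B * psdSqrt A)ᵀ * (psdSqrt B * psdSqrt A)) with hC
  have hCtr : sqrtTr A B = C.trace := by
    rw [hC, sqrtTr_eq_polar hA hB, sqrtTr]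
  refine ⟨psdSqrt A * W₀ᵀ, ?_, ?_⟩
  · rw [Matrix.transpose_mul, Matrix.transpose_transpose, psdSqrt_transpose hA]
    calc psdSqrt A * W₀ᵀ * (W₀ * psdSqrt A)
        = psdSqrt A * (W₀ᵀ * W₀) * psdSqrt A := by simp only [Matrix.mul_assoc]
      _ = psdSqrt A * psdSqrt A := by rw [hW₀o]; simp only [Matrix.mul_one]
      _ = A := psdSqrt_mul_self hA
  · have : psdSqrt A * W₀ᵀ * psdSqrt B = (psdSqrt A * W₀ᵀ * psdSqrt B) := rfl
    rw [hCtr]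
    calc (psdSqrt A * W₀ᵀ * psdSqrt B).trace
        = (psdSqrt B * psdSqrt A * W₀ᵀ).trace := by
          rw [Matrix.trace_mul_comm, ← Matrix.mul_assoc]
      _ = (W₀ * C * W₀ᵀ).trace := by rw [hW₀]
      _ = (C * (W₀ᵀ * W₀)).trace := by
          rw [Matrix.mul_assoc, Matrix.trace_mul_comm W₀ (C * W₀ᵀ), Matrix.mul_assoc]
      _ = C.trace := by rw [hW₀o, Matrix.mul_one]

end Bounds


section Frob

variable (X Y : Matrix (Fin n) (Fin n) ℝ)

lemma frob_nonneg : 0 ≤ (X * Xᵀ).trace := by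
  have : (X * Xᵀ).trace = ∑ i, ∑ j, X i j * X i j := by
    simp [Matrix.trace, Matrix.diag, Matrix.mul_apply]
  rw [this]
  exact Finset.sum_nonneg fun i _ => Finset.sum_nonneg fun j _ => mul_self_nonneg _

lemma frob_eq_zero (h : (X * Xᵀ).trace = 0) : X = 0 := by
  have htr : (X * Xᵀ).trace = ∑ i, ∑ j, X i j * X i j := by
    simp [Matrix.trace, Matrix.diag, Matrix.mul_apply]
  rw [htr] at h
  ext i j
  have h1 := (Finset.sum_eq_zero_iff_of_nonneg
    (fun i _ => Finset.sum_nonneg fun j _ => mul_self_nonneg (X i j))).mp h i (Finset.mem_univ i)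
  have h2 := (Finset.sum_eq_zero_iff_of_nonneg
    (fun j _ => mul_self_nonneg (X i j))).mp h1 j (Finset.mem_univ j)
  simpa [mul_self_eq_zero] using h2

lemma T_symm : (X * Yᵀ).trace = (Y * Xᵀ).trace := by
  rw [← Matrix.trace_transpose (X * Yᵀ), Matrix.transpose_mul, Matrix.transpose_transpose,
    Matrix.trace_mul_comm]

lemma T_sub : ((X - Y) * (X - Y)ᵀ).trace
    = (X * Xᵀ).trace - 2 * (X * Yᵀ).trace + (Y * Yᵀ).trace := by
  rw [Matrix.transpose_sub, Matrix.sub_mul, Matrix.mul_sub, Matrix.mul_sub]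
  rw [Matrix.trace_sub, Matrix.trace_sub, Matrix.trace_sub]
  rw [T_symm Y X]
  ring

lemma psd_mul_transpose : (X * Xᵀ).PosSemidef := by
  have := Matrix.posSemidef_self_mul_conjTranspose X
  rwa [Matrix.conjTranspose_eq_transpose_of_trivial] at this

end Frob

section Sums

variable {m : ℕ} (p : Fin m → ℝ) (G : Fin m → Matrix (Fin n) (Fin n) ℝ)
  (H : Matrix (Fin n) (Fin n) ℝ)

lemma T_sum_left : ((∑ i, p i • G i) * Hᵀ).trace = ∑ i, p i * (G i * Hᵀ).trace := by
  rw [Matrix.sum_mul, Matrix.trace_sum]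
  apply Finset.sum_congr rfl
  intro i _
  rw [Matrix.smul_mul, Matrix.trace_smul, smul_eq_mul]

variable {p G}

lemma orth_trace {A : Fin m → Matrix (Fin n) (Fin n) ℝ}
    (hGG : ∀ i, G i * (G i)ᵀ = A i) (horth : ∀ i j, i ≠ j → A i * A j = 0)
    {i j : Fin m} (hij : i ≠ j) : (G i * (G j)ᵀ).trace = 0 := by
  set X := (G i)ᵀ * G j with hX
  have hXT : Xᵀ = (G j)ᵀ * G i := by
    rw [hX, Matrix.transpose_mul, Matrix.transpose_transpose]
  have htr : (X * Xᵀ).trace = 0 := by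
    have t1 : (X * Xᵀ).trace = ((G j * (G j)ᵀ) * (G i * (G i)ᵀ)).trace := by
      rw [hX, hXT]
      rw [show (G i)ᵀ * G j * ((G j)ᵀ * G i) = (G i)ᵀ * (G j * (G j)ᵀ * G i) from by
        simp only [Matrix.mul_assoc], Matrix.trace_mul_comm]
      simp only [Matrix.mul_assoc]
    rw [t1, hGG, hGG, horth j i (Ne.symm hij), Matrix.trace_zero]
  have hX0 : X = 0 := frob_eq_zero X htr
  have hXT0 : (G j)ᵀ * G i = 0 := by rw [← hXT, hX0, Matrix.transpose_zero]
  rw [Matrix.trace_mul_comm, hXT0, Matrix.trace_zero]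

lemma trace_hat {A : Fin m → Matrix (Fin n) (Fin n) ℝ}
    (hGG : ∀ i, G i * (G i)ᵀ = A i) (horth : ∀ i j, i ≠ j → A i * A j = 0) :
    ((∑ i, p i • G i) * (∑ i, p i • G i)ᵀ).trace = ∑ i, p i ^ 2 * (A i).trace := by
  rw [T_sum_left]
  apply Finset.sum_congr rfl
  intro i _
  have h1 : (G i * (∑ j, p j • G j)ᵀ).trace = ∑ j, p j * (G j * (G i)ᵀ).trace := by
    rw [T_symm, T_sum_left]
  rw [h1]
  rw [Finset.sum_eq_single i]
  · rw [hGG i]; ring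
  · intro j _ hji
    rw [orth_trace hGG horth hji]; ring
  · intro h; exact absurd (Finset.mem_univ i) h

lemma biasvar (hp1 : ∑ i, p i = 1) :
    ∑ i, p i * ((G i - H) * (G i - H)ᵀ).trace
      = ∑ i, p i * (G i * (G i)ᵀ).trace - ((∑ i, p i • G i) * (∑ i, p i • G i)ᵀ).trace
        + ((∑ i, p i • G i - H) * (∑ i, p i • G i - H)ᵀ).trace := by
  set Ghat := ∑ i, p i • G i with hGhat
  have e1 : ∀ i, p i * ((G i - H) * (G i - H)ᵀ).trace
      = p i * (G i * (G i)ᵀ).trace - 2 * (p i * (G i * Hᵀ).trace) + p i * (H * Hᵀ).trace := by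
    intro i; rw [T_sub]; ring
  rw [Finset.sum_congr rfl fun i _ => e1 i]
  rw [Finset.sum_add_distrib, Finset.sum_sub_distrib, ← Finset.mul_sum, ← Finset.sum_mul, hp1]
  rw [← T_sum_left p G H, ← hGhat, T_sub Ghat H]
  ring

section Main

variable {m : ℕ} {A : Fin m → Matrix (Fin n) (Fin n) ℝ} {p : Fin m → ℝ}

lemma W2sq_eq_frob {A B : Matrix (Fin n) (Fin n) ℝ} (hA : A.PosSemidef) (hB : B.PosSemidef)
    {G : Matrix (Fin n) (Fin n) ℝ} (hG : G * Gᵀ = A)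
    (hopt : (G * psdSqrt B).trace = sqrtTr A B) :
    W2sq A B = ((G - psdSqrt B) * (G - psdSqrt B)ᵀ).trace := by
  have hBsq : psdSqrt B * (psdSqrt B)ᵀ = B := by
    rw [psdSqrt_transpose hB]; exact psdSqrt_mul_self hB
  have h2 : (G * (psdSqrt B)ᵀ).trace = sqrtTr A B := by rw [psdSqrt_transpose hB, hopt]
  rw [T_sub, hG, hBsq, h2, W2sq]
  ring

lemma key1 (hA : ∀ i, (A i).PosSemidef) (horth : ∀ i j, i ≠ j → A i * A j = 0)
    (hp : ∀ i, 0 < p i) (hp1 : ∑ i, p i = 1)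
    {B : Matrix (Fin n) (Fin n) ℝ} (hB : B.PosSemidef) :
    (∑ i, p i * (A i).trace) - (∑ i, p i ^ 2 * (A i).trace) ≤ ∑ i, p i * W2sq (A i) B := by
  choose G hGG hopt using fun i => exists_optimal_G (hA i) hB
  have e : ∀ i, W2sq (A i) B = ((G i - psdSqrt B) * (G i - psdSqrt B)ᵀ).trace :=
    fun i => W2sq_eq_frob (hA i) hB (hGG i) (hopt i)
  calc (∑ i, p i * (A i).trace) - (∑ i, p i ^ 2 * (A i).trace)
      ≤ (∑ i, p i * (A i).trace) - (∑ i, p i ^ 2 * (A i).trace)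
        + ((∑ i, p i • G i - psdSqrt B) * (∑ i, p i • G i - psdSqrt B)ᵀ).trace := by
        have := frob_nonneg (∑ i, p i • G i - psdSqrt B)
        linarith
    _ = ∑ i, p i * W2sq (A i) B := by
        have hsum : ∑ i, p i * W2sq (A i) B
            = ∑ i, p i * ((G i - psdSqrt B) * (G i - psdSqrt B)ᵀ).trace :=
          Finset.sum_congr rfl fun i _ => by rw [e i]
        have hAA : ∑ i, p i * (G i * (G i)ᵀ).trace = ∑ i, p i * (A i).trace :=
          Finset.sum_congr rfl fun i _ => by rw [hGG i]
        rw [hsum, biasvar (G := G) (psdSqrt B) hp1, trace_hat hGG horth, hAA]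

lemma key2 (hA : ∀ i, (A i).PosSemidef) (horth : ∀ i j, i ≠ j → A i * A j = 0)
    (hp : ∀ i, 0 < p i) (hp1 : ∑ i, p i = 1)
    {G : Fin m → Matrix (Fin n) (Fin n) ℝ} (hGG : ∀ i, G i * (G i)ᵀ = A i) :
    ∑ i, p i * W2sq (A i) ((∑ i, p i • G i) * (∑ i, p i • G i)ᵀ)
      ≤ (∑ i, p i * (A i).trace) - (∑ i, p i ^ 2 * (A i).trace) := by
  set Ghat := ∑ i, p i • G i with hGhat
  set B := Ghat * Ghatᵀ with hBdef
  have hBpsd : B.PosSemidef := psd_mul_transpose Ghat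
  have hBtr : B.trace = ∑ i, p i ^ 2 * (A i).trace := trace_hat hGG horth
  have hle : ∀ i, p i * W2sq (A i) B
      ≤ p i * ((A i).trace + B.trace - 2 * (G i * Ghatᵀ).trace) := by
    intro i
    apply mul_le_mul_of_nonneg_left _ (hp i).le
    rw [W2sq]
    have := trace_le_sqrtTr (hA i) hBpsd (hGG i) hBdef.symm
    linarith
  calc ∑ i, p i * W2sq (A i) B
      ≤ ∑ i, p i * ((A i).trace + B.trace - 2 * (G i * Ghatᵀ).trace) :=
        Finset.sum_le_sum fun i _ => hle i
    _ = (∑ i, p i * (A i).trace) - (∑ i, p i ^ 2 * (A i).trace) := by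
        have expand : ∀ i, p i * ((A i).trace + B.trace - 2 * (G i * Ghatᵀ).trace)
            = p i * (A i).trace + p i * B.trace - 2 * (p i * (G i * Ghatᵀ).trace) := by
          intro i; ring
        rw [Finset.sum_congr rfl fun i _ => expand i]
        rw [Finset.sum_sub_distrib, Finset.sum_add_distrib, ← Finset.sum_mul, hp1,
          ← Finset.mul_sum, ← T_sum_left p G Ghat, ← hGhat, ← hBdef, hBtr]
        ring

end Main

end Sums

end Aux

/-- If the psd matrices `A₁, …, A_m` satisfy `Aᵢ·Aⱼ = 0` for `i ≠ j`, then
`Â ⪰ 0` is a weighted Wasserstein barycenter iff `Â = Ĝ·Ĝᵀ` with `Ĝ = ∑ᵢ pᵢ·Gᵢ` for some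
Green's matrices `Gᵢ·Gᵢᵀ = Aᵢ`. -/
theorem stmt10 {n m : ℕ} (A : Fin m → Matrix (Fin n) (Fin n) ℝ)
    (hA : ∀ i, (A i).PosSemidef)
    (horth : ∀ i j, i ≠ j → A i * A j = 0)
    (p : Fin m → ℝ) (hp : ∀ i, 0 < p i) (hp1 : ∑ i, p i = 1)
    (Ahat : Matrix (Fin n) (Fin n) ℝ) (hAhat : Ahat.PosSemidef) :
    (∀ B : Matrix (Fin n) (Fin n) ℝ, B.PosSemidef →
        ∑ i, p i * W2sq (A i) Ahat ≤ ∑ i, p i * W2sq (A i) B) ↔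
      ∃ G : Fin m → Matrix (Fin n) (Fin n) ℝ, (∀ i, G i * (G i)ᵀ = A i) ∧
        Ahat = (∑ i, p i • G i) * (∑ i, p i • G i)ᵀ := by
  set c := (∑ i, p i * (A i).trace) - (∑ i, p i ^ 2 * (A i).trace) with hc
  constructor
  · intro hmin
    have hG0G : ∀ i, psdSqrt (A i) * (psdSqrt (A i))ᵀ = A i := fun i => by
      rw [psdSqrt_transpose (hA i)]; exact psdSqrt_mul_self (hA i)
    have hB0 : ((∑ i, p i • psdSqrt (A i)) * (∑ i, p i • psdSqrt (A i))ᵀ).PosSemidef :=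
      psd_mul_transpose _
    have h1 : ∑ i, p i * W2sq (A i) Ahat ≤ c :=
      le_trans (hmin _ hB0) (key2 hA horth hp hp1 hG0G)
    have h2 : c ≤ ∑ i, p i * W2sq (A i) Ahat := key1 hA horth hp hp1 hAhat
    have heq : ∑ i, p i * W2sq (A i) Ahat = c := le_antisymm h1 h2
    choose G hGG hopt using fun i => exists_optimal_G (hA i) hAhat
    have e : ∀ i, W2sq (A i) Ahat
        = ((G i - psdSqrt Ahat) * (G i - psdSqrt Ahat)ᵀ).trace :=
      fun i => W2sq_eq_frob (hA i) hAhat (hGG i) (hopt i)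
    have hsum : ∑ i, p i * W2sq (A i) Ahat
        = c + ((∑ i, p i • G i - psdSqrt Ahat) * (∑ i, p i • G i - psdSqrt Ahat)ᵀ).trace := by
      have hsum' : ∑ i, p i * W2sq (A i) Ahat
          = ∑ i, p i * ((G i - psdSqrt Ahat) * (G i - psdSqrt Ahat)ᵀ).trace :=
        Finset.sum_congr rfl fun i _ => by rw [e i]
      have hAA : ∑ i, p i * (G i * (G i)ᵀ).trace = ∑ i, p i * (A i).trace :=
        Finset.sum_congr rfl fun i _ => by rw [hGG i]
      rw [hsum', biasvar (G := G) (psdSqrt Ahat) hp1, trace_hat hGG horth, hAA, hc]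
    have hfrob0 : ((∑ i, p i • G i - psdSqrt Ahat)
        * (∑ i, p i • G i - psdSqrt Ahat)ᵀ).trace = 0 := by
      rw [hsum] at heq; linarith
    have hGhatEq : ∑ i, p i • G i = psdSqrt Ahat :=
      sub_eq_zero.mp (frob_eq_zero _ hfrob0)
    refine ⟨G, hGG, ?_⟩
    rw [hGhatEq, psdSqrt_transpose hAhat, psdSqrt_mul_self hAhat]
  · rintro ⟨G, hGG, hEq⟩ B hB
    calc ∑ i, p i * W2sq (A i) Ahat
        = ∑ i, p i * W2sq (A i) ((∑ i, p i • G i) * (∑ i, p i • G i)ᵀ) := by rw [← hEq]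
      _ ≤ c := key2 hA horth hp hp1 hGG
      _ ≤ ∑ i, p i * W2sq (A i) B := key1 hA horth hp hp1 hB
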